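/- A constant function u ≡ c on an open set Ω ⊂ ℝ² satisfies the global median value property: for every x ∈ Ω and every r > 0 with closure of B(x,r) contained in Ω, the median of u over ∂B(x,r) equals u(x). Conversely, if u is continuous on a bounded connected open Ω, continuous up to the boundary, satisfies the local median value property, and u is constant on ∂Ω, then u is constant on Ω. -/

import Mathlib

open MeasureTheory Set Metric Real Filter Topology

/-- `m` is a median of `u` over the circle `∂B(x,r)` with respect to arclength measure,
parametrized by `θ ↦ x + r e^{iθ}`. -/
def IsCircleMedian (x : ℂ) (r : ℝ) (u : ℂ → ℝ) (m : ℝ) : Prop :=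
  volume (Ioc (0:ℝ) (2*π)) / 2 ≤ volume {θ ∈ Ioc (0:ℝ) (2*π) | m ≤ u (circleMap x r θ)} ∧
  volume (Ioc (0:ℝ) (2*π)) / 2 ≤ volume {θ ∈ Ioc (0:ℝ) (2*π) | u (circleMap x r θ) ≤ m}

/-- `u` has the local median value property on `Ω`. -/
def HasLMVP (Ω : Set ℂ) (u : ℂ → ℝ) : Prop :=
  ∃ R : ℂ → ℝ, ContinuousOn R Ω ∧
    (∀ x ∈ Ω, 0 < R x ∧ R x ≤ Metric.infDist x Ωᶜ) ∧
    (∀ x ∈ Ω, ∀ r : ℝ, 0 < r → r ≤ R x → IsCircleMedian x r u (u x))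

lemma half_vol : volume (Ioc (0:ℝ) (2*π)) / 2 = ENNReal.ofReal π := by
  rw [Real.volume_Ioc]
  rw [show (2*π - 0 : ℝ) = 2 * π by ring, ENNReal.ofReal_mul (by norm_num : (0:ℝ) ≤ 2)]
  rw [show (ENNReal.ofReal 2) = 2 by simp]
  rw [mul_comm, mul_div_assoc]; simp [ENNReal.div_self]

lemma cos_nonpos_mem (θ : ℝ) (h1 : θ ∈ Ioc (0:ℝ) (2*π)) (h2 : Real.cos θ ≤ 0) :
    θ ∈ Icc (π/2) (3*π/2) := by
  obtain ⟨h0, h2π⟩ := h1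
  constructor
  · by_contra h; push_neg at h
    exact absurd h2 (not_le.mpr (Real.cos_pos_of_mem_Ioo ⟨by linarith [pi_pos], h⟩))
  · by_contra h; push_neg at h
    have : Real.cos (θ - 2*π) > 0 :=
      Real.cos_pos_of_mem_Ioo ⟨by linarith, by linarith [pi_pos]⟩
    rw [Real.cos_sub_two_pi] at this
    linarith

lemma max_le_bdry (Ω : Set ℂ) (hΩ : IsOpen Ω) (hb : Bornology.IsBounded Ω)
    (u : ℂ → ℝ) (hu : ContinuousOn u (closure Ω)) (hlmvp : HasLMVP Ω u)
    (c : ℝ) (hbc : ∀ x ∈ frontier Ω, u x = c) :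
    ∀ x ∈ Ω, u x ≤ c := by
  obtain ⟨R, hRcont, hRpos, hmed⟩ := hlmvp
  intro x hx
  have hC : IsCompact (closure Ω) := hb.isCompact_closure
  obtain ⟨x0, hx0, hmax⟩ := hC.exists_isMaxOn ⟨x, subset_closure hx⟩ hu
  set M := u x0 with hM
  suffices hMc : M ≤ c by exact le_trans (hmax (subset_closure hx)) hMc
  by_contra hMc; push_neg at hMc
  set K := closure Ω ∩ u ⁻¹' {M} with hK
  have hKclosed : IsClosed K :=
    hu.preimage_isClosed_of_isClosed isClosed_closure isClosed_singleton
  have hKsub : K ⊆ Ω := by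
    rintro z ⟨hz1, hz2⟩
    by_contra h
    have hfr : z ∈ frontier Ω := by
      rw [frontier, hΩ.interior_eq]; exact ⟨hz1, h⟩
    have := hbc z hfr
    simp only [mem_preimage, mem_singleton_iff] at hz2
    rw [this] at hz2; linarith
  -- key propagation step
  have key : ∀ z ∈ K, (∀ y ∈ K, y.re ≤ z.re) → ∀ r : ℝ, 0 < r → r ≤ R z →
      z + r * Complex.I ∈ K := by
    intro z hzK hzmax r hr hrR
    have hzΩ : z ∈ Ω := hKsub hzK
    have hball : closedBall z r ⊆ closure Ω :=
      (closedBall_subset_closedBall (hrR.trans (hRpos z hzΩ).2)).trans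
        (Metric.closedBall_infDist_compl_subset_closure hzΩ)
    have hcirc : ∀ θ : ℝ, circleMap z r θ ∈ closure Ω :=
      fun θ => hball (circleMap_mem_closedBall z hr.le θ)
    have hf : Continuous (fun θ : ℝ => u (circleMap z r θ)) :=
      hu.comp_continuous (continuous_circleMap z r) hcirc
    have huz : u z = M := hzK.2
    obtain ⟨h1, -⟩ := hmed z hzΩ r hr hrR
    rw [huz, half_vol] at h1
    set B := Icc (π/2) (3*π/2) ∩ {θ : ℝ | u (circleMap z r θ) = M} with hBdef
    have hBclosed : IsClosed B :=
      isClosed_Icc.inter (isClosed_eq hf continuous_const)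
    have hAB : {θ ∈ Ioc (0:ℝ) (2*π) | M ≤ u (circleMap z r θ)} ⊆ B := by
      rintro θ ⟨hθ, hMθ⟩
      have heq : u (circleMap z r θ) = M := le_antisymm (hmax (hcirc θ)) hMθ
      have hKmem : circleMap z r θ ∈ K := ⟨hcirc θ, by simp [heq]⟩
      have hre := hzmax _ hKmem
      have hre' : (circleMap z r θ).re = z.re + r * Real.cos θ := by
        simp [circleMap, Complex.exp_mul_I, Complex.cos_ofReal_re]
      rw [hre'] at hre
      have hcos : Real.cos θ ≤ 0 := by nlinarith
      exact ⟨cos_nonpos_mem θ hθ hcos, heq⟩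
    have hvolB : ENNReal.ofReal π ≤ volume B := h1.trans (measure_mono hAB)
    have hdiff : volume (Icc (π/2) (3*π/2) \ B) = 0 := by
      rw [measure_diff inter_subset_left hBclosed.measurableSet.nullMeasurableSet
        (lt_of_le_of_lt (measure_mono inter_subset_left)
          (by rw [Real.volume_Icc]; exact ENNReal.ofReal_lt_top)).ne]
      rw [Real.volume_Icc, show (3*π/2 - π/2 : ℝ) = π by ring]
      exact tsub_eq_zero_of_le hvolB
    -- show u (circleMap z r (π/2)) = M
    have hcm : circleMap z r (π/2) = z + r * Complex.I := by
      simp [circleMap, Complex.exp_mul_I]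
    have hmem : u (circleMap z r (π/2)) = M := by
      by_contra hne
      have hlt : u (circleMap z r (π/2)) < M := lt_of_le_of_ne (hmax (hcirc (π/2))) hne
      have hopen : IsOpen {θ : ℝ | u (circleMap z r θ) < M} := isOpen_lt hf continuous_const
      obtain ⟨δ, hδ, hballδ⟩ := Metric.isOpen_iff.mp hopen (π/2) hlt
      have hsub : Ico (π/2) (π/2 + min δ π) ⊆ Icc (π/2) (3*π/2) \ B := by
        rintro θ ⟨hθ1, hθ2⟩
        have hm1 : min δ π ≤ δ := min_le_left δ π
        have hm2 : min δ π ≤ π := min_le_right δ π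
        have hθδ : θ ∈ Metric.ball (π/2) δ := by
          rw [Real.ball_eq_Ioo]
          constructor <;> linarith
        have hlt' := hballδ hθδ
        exact ⟨⟨hθ1, by linarith⟩, fun hB => (ne_of_lt hlt') hB.2⟩
      have : (0 : ENNReal) < volume (Ico (π/2) (π/2 + min δ π)) := by
        rw [Real.volume_Ico]
        simp only [add_sub_cancel_left]
        exact ENNReal.ofReal_pos.mpr (lt_min hδ pi_pos)
      exact absurd (le_trans (measure_mono hsub) hdiff.le) (not_le.mpr this)
    rw [hcm] at hmem
    exact ⟨hball (by rw [← hcm]; exact circleMap_mem_closedBall z hr.le _), by simp [hmem]⟩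
  -- propagation to infinity: contradiction
  have hKcompact : IsCompact K := hC.of_isClosed_subset hKclosed inter_subset_left
  have hKne : x0 ∈ K := ⟨hx0, by simp [hM]⟩
  obtain ⟨x1, hx1K, hx1max⟩ :=
    hKcompact.exists_isMaxOn ⟨x0, hKne⟩ Complex.continuous_re.continuousOn
  set T := {t : ℝ | x1 + t * Complex.I ∈ K} with hT
  have hTclosed : IsClosed T := hKclosed.preimage (by continuity)
  have hT0 : (0:ℝ) ∈ T := by simp [hT, hx1K]
  obtain ⟨ρ, hρ⟩ := (hKcompact.isBounded.subset_closedBall x1)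
  have hTbdd : BddAbove T := by
    refine ⟨ρ, fun t ht => ?_⟩
    have := hρ ht
    rw [mem_closedBall, dist_eq_norm] at this
    simp only [add_sub_cancel_left] at this
    rw [show ‖(t:ℂ) * Complex.I‖ = |t| by simp] at this
    exact (le_abs_self t).trans this
  have ht0 : sSup T ∈ T := hTclosed.csSup_mem ⟨0, hT0⟩ hTbdd
  have hzre : (x1 + (sSup T : ℝ) * Complex.I).re = x1.re := by simp
  have hzΩ : x1 + (sSup T : ℝ) * Complex.I ∈ Ω := hKsub ht0
  have hRz := (hRpos _ hzΩ).1
  have hstep := key _ ht0 (fun y hy => by rw [hzre]; exact hx1max hy) _ hRz le_rfl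
  have hmemT : sSup T + R (x1 + (sSup T : ℝ) * Complex.I) ∈ T := by
    show x1 + ((sSup T + R (x1 + (sSup T : ℝ) * Complex.I) : ℝ) : ℂ) * Complex.I ∈ K
    have heq : x1 + ((sSup T + R (x1 + (sSup T : ℝ) * Complex.I) : ℝ) : ℂ) * Complex.I =
        x1 + (sSup T : ℝ) * Complex.I + (R (x1 + (sSup T : ℝ) * Complex.I) : ℝ) * Complex.I := by
      push_cast; ring
    rw [heq]; exact hstep
  have hle := le_csSup hTbdd hmemT
  linarith

lemma neg_lmvp (Ω : Set ℂ) (u : ℂ → ℝ) (h : HasLMVP Ω u) : HasLMVP Ω (fun z => -u z) := by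
  obtain ⟨R, h1, h2, h3⟩ := h
  refine ⟨R, h1, h2, fun x hx r hr hrR => ?_⟩
  obtain ⟨ha, hb⟩ := h3 x hx r hr hrR
  constructor
  · refine le_trans hb (le_of_eq (congrArg volume ?_))
    ext θ; simp only [mem_setOf_eq, neg_le_neg_iff]
  · refine le_trans ha (le_of_eq (congrArg volume ?_))
    ext θ; simp only [mem_setOf_eq, neg_le_neg_iff]

theorem constant_gmvp_and_converse (Ω : Set ℂ) (hΩ : IsOpen Ω)
    (hb : Bornology.IsBounded Ω) (hconn : IsConnected Ω)
    (u : ℂ → ℝ) (hu : ContinuousOn u (closure Ω)) (hlmvp : HasLMVP Ω u)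
    (hbc : ∃ c : ℝ, ∀ x ∈ frontier Ω, u x = c) :
    (∀ (c : ℝ) (w : ℂ → ℝ), (∀ z : ℂ, w z = c) →
      ∀ x ∈ Ω, ∀ r > (0:ℝ), closedBall x r ⊆ Ω → IsCircleMedian x r w (w x)) ∧
    (∃ c : ℝ, ∀ x ∈ Ω, u x = c) := by
  constructor
  · intro c w hw x hx r hr hball
    have hset : ∀ m : ℝ, {θ ∈ Ioc (0:ℝ) (2*π) | m ≤ m} = Ioc (0:ℝ) (2*π) := by
      intro m; ext θ; simp
    constructor
    · simp only [hw, hset]; exact ENNReal.half_le_self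
    · simp only [hw, hset]; exact ENNReal.half_le_self
  · obtain ⟨c, hc⟩ := hbc
    have h1 := max_le_bdry Ω hΩ hb u hu hlmvp c hc
    have h2 := max_le_bdry Ω hΩ hb (fun z => -u z) hu.neg (neg_lmvp Ω u hlmvp) (-c)
      (fun x hx => by simp [hc x hx])
    exact ⟨c, fun x hx => le_antisymm (h1 x hx) (by have := h2 x hx; simp at this; linarith)⟩
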